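/- arXiv:1812.10776 — 2 statements merged into one kernel-verified Lean document; each statement's English description precedes it below -/
import Mathlib

section
/- Let (ξ_n)_{n≥1} be i.i.d. centered real random variables with E[exp(θ|ξ_1|)] < ∞ for some θ > 0, and let S_n = ξ_1 + ... + ξ_n. Then for every ε > 0 and δ ∈ (0, 1/2) there exists a random variable K ≥ 0 with E[K²] < ∞ such that almost surely |S_n| ≤ K + ε n^{1/2+δ} for all n ≥ 1. -/
open MeasureTheory ProbabilityTheory Filter
open scoped ENNReal NNReal

lemma aux_exp_le (y : ℝ) : Real.exp y ≤ 1 + y + y ^ 2 * Real.exp |y| := by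
  have hmul : Real.exp (-y) * Real.exp y = 1 := by rw [← Real.exp_add]; simp
  have hkey := mul_le_mul_of_nonneg_right (Real.add_one_le_exp (-y)) (Real.exp_pos y).le
  have h1 : (1 - y) * Real.exp y ≤ 1 := by nlinarith
  rcases le_or_gt 0 y with hy | hy
  · rw [abs_of_nonneg hy]
    nlinarith [Real.exp_pos y, mul_le_mul_of_nonneg_left h1 hy]
  · have h3 : Real.exp y ≤ 1 + y + y ^ 2 := by nlinarith [Real.exp_pos y]
    have h4 : (1:ℝ) ≤ Real.exp |y| := Real.one_le_exp (abs_nonneg y)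
    nlinarith [sq_nonneg y]

lemma aux_pow_le_exp {c x : ℝ} (hc : 0 < c) (hx : 0 ≤ x) (k : ℕ) :
    x ^ k ≤ c⁻¹ ^ k * Real.exp (k * (c * x)) := by
  have h1 : x ≤ c⁻¹ * Real.exp (c * x) := by
    have := Real.add_one_le_exp (c * x)
    rw [le_inv_mul_iff₀ hc]
    nlinarith
  calc x ^ k ≤ (c⁻¹ * Real.exp (c * x)) ^ k := pow_le_pow_left₀ hx h1 k
    _ = c⁻¹ ^ k * Real.exp (k * (c * x)) := by rw [mul_pow, Real.exp_nat_mul]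

lemma aux_summable {c β : ℝ} (hc : 0 < c) (hβ : 0 < β) :
    Summable (fun n : ℕ => (n : ℝ) ^ 2 * Real.exp (-(c * (n : ℝ) ^ β))) := by
  obtain ⟨k, hk⟩ : ∃ k : ℕ, 4 ≤ (k : ℝ) * β := by
    obtain ⟨k, hk⟩ := exists_nat_gt (4 / β)
    rw [div_lt_iff₀ hβ] at hk
    exact ⟨k, hk.le⟩
  refine Summable.of_nonneg_of_le (fun n => by positivity)
    (fun n => ?_) ((Real.summable_nat_rpow.mpr (by norm_num : (-2:ℝ) < -1)).mul_left
      (k.factorial / c ^ k))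
  rcases Nat.eq_zero_or_pos n with rfl | hn
  · simp
  have hn1 : (1:ℝ) ≤ (n:ℝ) := by exact_mod_cast hn
  have hnp : (0:ℝ) < n := by linarith
  have hkf : (0:ℝ) < k.factorial := by exact_mod_cast Nat.factorial_pos k
  have hterm : (c * (n:ℝ) ^ β) ^ k / k.factorial ≤ Real.exp (c * (n:ℝ) ^ β) := by
    refine le_trans ?_ (Real.sum_le_exp_of_nonneg (by positivity) (k+1))
    exact Finset.single_le_sum (f := fun i => (c * (n:ℝ) ^ β) ^ i / i.factorial)
      (fun i _ => by positivity) (Finset.self_mem_range_succ k)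
  have hge : (n:ℝ) ^ (4:ℝ) ≤ ((n:ℝ) ^ β) ^ k := by
    rw [← Real.rpow_natCast ((n:ℝ) ^ β) k, ← Real.rpow_mul hnp.le]
    exact Real.rpow_le_rpow_of_exponent_le hn1 (by rw [mul_comm]; exact_mod_cast hk)
  have h4 : ((n:ℝ)) ^ (4:ℕ) ≤ k.factorial / c ^ k * Real.exp (c * (n:ℝ) ^ β) := by
    have h5 : (c * (n:ℝ) ^ β) ^ k = c ^ k * ((n:ℝ) ^ β) ^ k := mul_pow _ _ _
    have h6 : ((n:ℝ)) ^ (4:ℕ) = (n:ℝ) ^ (4:ℝ) := by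
      rw [← Real.rpow_natCast (n:ℝ) 4]; norm_num
    rw [h6]
    refine le_trans hge ?_
    rw [div_mul_eq_mul_div, le_div_iff₀ (by positivity)]
    rw [h5] at hterm
    rw [div_le_iff₀ hkf] at hterm
    nlinarith [pow_pos hc k]
  have hrw : (n:ℝ) ^ (-2:ℝ) = ((n:ℝ) ^ (2:ℕ))⁻¹ := by
    rw [Real.rpow_neg hnp.le, ← Real.rpow_natCast (n:ℝ) 2]
    norm_num
  rw [Real.exp_neg, hrw, ← div_eq_mul_inv, ← div_eq_mul_inv,
    div_le_div_iff₀ (Real.exp_pos _) (by positivity)]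
  nlinarith [h4]


set_option maxHeartbeats 2000000 in
/-- For an i.i.d. sequence of centered random variables whose absolute value
has a finite exponential moment of some order `θ > 0`, with partial sums `S n`, for every
`ε > 0` and `δ ∈ (0, 1/2)` there is a nonnegative random variable `K` with `E[K²] < ∞`
such that almost surely `|S n| ≤ K + ε · n^(1/2 + δ)` for all `n ≥ 1`. -/
theorem stmt_1 {Ω : Type*} [MeasurableSpace Ω] (μ : Measure Ω) [IsProbabilityMeasure μ]
    (ξ : ℕ → Ω → ℝ) (hmeas : ∀ n, Measurable (ξ n))
    (hindep : iIndepFun ξ μ)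
    (hident : ∀ n, μ.map (ξ n) = μ.map (ξ 1))
    (hint : ∀ n, Integrable (ξ n) μ)
    (hcentered : ∀ n, ∫ ω, ξ n ω ∂μ = 0)
    (θ : ℝ) (hθ : 0 < θ)
    (hexp : Integrable (fun ω => Real.exp (θ * |ξ 1 ω|)) μ)
    (S : ℕ → Ω → ℝ)
    (hS : ∀ n ω, S n ω = ∑ i ∈ Finset.range n, ξ (i + 1) ω)
    (ε δ : ℝ) (hε : 0 < ε) (hδ : 0 < δ) (hδ' : δ < 1 / 2) :
    ∃ K : Ω → ℝ, (∀ ω, 0 ≤ K ω) ∧ Integrable (fun ω => (K ω) ^ 2) μ ∧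
      ∀ᵐ ω ∂μ, ∀ n : ℕ, 1 ≤ n →
        |S n ω| ≤ K ω + ε * (n : ℝ) ^ ((1 : ℝ) / 2 + δ) := by
  -- partial sums as Finset sums of the family
  have hSfun : ∀ n, S n = ∑ i ∈ Finset.Ico 1 (n+1), ξ i := by
    intro n
    funext ω
    rw [hS, Finset.sum_apply, Finset.sum_Ico_eq_sum_range]
    simp [add_comm]
  have hSmeas : ∀ n, Measurable (S n) := by
    intro n
    have h : S n = fun ω => ∑ i ∈ Finset.range n, ξ (i+1) ω := funext (hS n)
    rw [h]
    exact Finset.measurable_sum _ (fun i _ => hmeas _)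
  -- transfer of lintegrals by identical distribution
  have hlint : ∀ (i : ℕ) (f : ℝ → ℝ≥0∞), Measurable f →
      ∫⁻ ω, f (ξ i ω) ∂μ = ∫⁻ ω, f (ξ 1 ω) ∂μ := by
    intro i f hf
    rw [← lintegral_map hf (hmeas i), ← lintegral_map hf (hmeas 1), hident i]
  -- each ξ i has the exponential moment
  have hintexp : ∀ i : ℕ, Integrable (fun ω => Real.exp (θ * |ξ i ω|)) μ := by
    intro i
    have hc : AEStronglyMeasurable (fun x : ℝ => Real.exp (θ * |x|)) (μ.map (ξ i)) :=
      (Real.continuous_exp.comp (continuous_const.mul continuous_abs)).aestronglyMeasurable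
    have hc1 : AEStronglyMeasurable (fun x : ℝ => Real.exp (θ * |x|)) (μ.map (ξ 1)) :=
      (Real.continuous_exp.comp (continuous_const.mul continuous_abs)).aestronglyMeasurable
    have h2 : Integrable (fun x : ℝ => Real.exp (θ * |x|)) (μ.map (ξ 1)) :=
      (integrable_map_measure hc1 (hmeas 1).aemeasurable).mpr hexp
    rw [← hident i] at h2
    exact (integrable_map_measure hc (hmeas i).aemeasurable).mp h2
  have hintexp' : ∀ (i : ℕ) (s : ℝ), |s| ≤ θ →
      Integrable (fun ω => Real.exp (s * ξ i ω)) μ := by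
    intro i s hs
    refine (hintexp i).mono
      ((Real.measurable_exp.comp ((hmeas i).const_mul s)).aestronglyMeasurable) ?_
    filter_upwards with ω
    rw [Real.norm_eq_abs, Real.norm_eq_abs, abs_of_pos (Real.exp_pos _),
      abs_of_pos (Real.exp_pos _), Real.exp_le_exp]
    calc s * ξ i ω ≤ |s * ξ i ω| := le_abs_self _
      _ = |s| * |ξ i ω| := abs_mul _ _
      _ ≤ θ * |ξ i ω| := mul_le_mul_of_nonneg_right hs (abs_nonneg _)
  -- the constant C controlling the mgf
  set C : ℝ := ∫ ω, (ξ 1 ω) ^ 2 * Real.exp (θ/2 * |ξ 1 ω|) ∂μ with hCdef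
  have hptC : ∀ x : ℝ, x ^ 2 * Real.exp (θ/2 * |x|) ≤ (θ/4)⁻¹ ^ 2 * Real.exp (θ * |x|) := by
    intro x
    have h := aux_pow_le_exp (by linarith : (0:ℝ) < θ/4) (abs_nonneg x) 2
    have h2 : ((2:ℕ):ℝ) * (θ/4 * |x|) = θ/2 * |x| := by push_cast; ring
    rw [h2] at h
    have h3 : Real.exp (θ/2 * |x|) * Real.exp (θ/2 * |x|) = Real.exp (θ * |x|) := by
      rw [← Real.exp_add]; ring_nf
    have h4 : x ^ 2 = |x| ^ 2 := (sq_abs x).symm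
    nlinarith [Real.exp_pos (θ/2 * |x|)]
  have hCint : Integrable (fun ω => (ξ 1 ω) ^ 2 * Real.exp (θ/2 * |ξ 1 ω|)) μ := by
    refine (hexp.const_mul ((θ/4)⁻¹ ^ 2)).mono
      ((((hmeas 1).pow_const 2).mul
        (Real.measurable_exp.comp (((hmeas 1).abs).const_mul (θ/2)))).aestronglyMeasurable) ?_
    filter_upwards with ω
    have h2 : (0:ℝ) ≤ (ξ 1 ω) ^ 2 * Real.exp (θ/2 * |ξ 1 ω|) := by positivity
    have h3 : (0:ℝ) ≤ (θ/4)⁻¹ ^ 2 * Real.exp (θ * |ξ 1 ω|) := by positivity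
    calc ‖(ξ 1 ω) ^ 2 * Real.exp (θ/2 * |ξ 1 ω|)‖
        = (ξ 1 ω) ^ 2 * Real.exp (θ/2 * |ξ 1 ω|) := by rw [Real.norm_eq_abs, abs_of_nonneg h2]
      _ ≤ (θ/4)⁻¹ ^ 2 * Real.exp (θ * |ξ 1 ω|) := hptC _
      _ = ‖(θ/4)⁻¹ ^ 2 * Real.exp (θ * |ξ 1 ω|)‖ := by rw [Real.norm_eq_abs, abs_of_nonneg h3]
  have hC0 : 0 ≤ C := integral_nonneg (fun ω => by positivity)
  -- mgf bound for a single variable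
  have hmgf1 : ∀ s : ℝ, |s| ≤ θ/2 → mgf (ξ 1) μ s ≤ Real.exp (C * s ^ 2) := by
    intro s hs
    have hint1 : Integrable (fun ω => Real.exp (s * ξ 1 ω)) μ :=
      hintexp' 1 s (hs.trans (by linarith))
    have hRHSint : Integrable
        (fun ω => 1 + s * ξ 1 ω + s ^ 2 * ((ξ 1 ω) ^ 2 * Real.exp (θ/2 * |ξ 1 ω|))) μ :=
      (((integrable_const (1:ℝ)).add ((hint 1).const_mul s)).add (hCint.const_mul (s ^ 2)))
    have hpt : ∀ ω, Real.exp (s * ξ 1 ω) ≤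
        1 + s * ξ 1 ω + s ^ 2 * ((ξ 1 ω) ^ 2 * Real.exp (θ/2 * |ξ 1 ω|)) := by
      intro ω
      refine (aux_exp_le (s * ξ 1 ω)).trans ?_
      have habs : |s * ξ 1 ω| ≤ θ/2 * |ξ 1 ω| := by
        rw [abs_mul]; exact mul_le_mul_of_nonneg_right hs (abs_nonneg _)
      have hexp2 := Real.exp_le_exp.2 habs
      have hsq : (s * ξ 1 ω) ^ 2 = s ^ 2 * (ξ 1 ω) ^ 2 := by ring
      nlinarith [sq_nonneg (s * ξ 1 ω), Real.exp_pos (|s * ξ 1 ω|),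
        mul_le_mul_of_nonneg_left hexp2 (sq_nonneg (s * ξ 1 ω))]
    have h2 : mgf (ξ 1) μ s ≤
        ∫ ω, (1 + s * ξ 1 ω + s ^ 2 * ((ξ 1 ω) ^ 2 * Real.exp (θ/2 * |ξ 1 ω|))) ∂μ :=
      integral_mono hint1 hRHSint hpt
    have h3 : ∫ ω, (1 + s * ξ 1 ω + s ^ 2 * ((ξ 1 ω) ^ 2 * Real.exp (θ/2 * |ξ 1 ω|))) ∂μ
        = 1 + s ^ 2 * C := by
      have hIc : Integrable (fun _ : Ω => (1:ℝ)) μ := integrable_const 1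
      have hIl : Integrable (fun ω => s * ξ 1 ω) μ := (hint 1).const_mul s
      have hIq : Integrable
          (fun ω => s ^ 2 * ((ξ 1 ω) ^ 2 * Real.exp (θ/2 * |ξ 1 ω|))) μ :=
        hCint.const_mul _
      have hI1 : Integrable (fun ω => 1 + s * ξ 1 ω) μ := hIc.add hIl
      rw [integral_add hI1 hIq, integral_add hIc hIl, integral_const,
        integral_const_mul, integral_const_mul, hcentered 1]
      simp [hCdef]
    rw [h3] at h2
    refine h2.trans ?_
    have := Real.add_one_le_exp (C * s ^ 2)
    nlinarith
  -- mgf bound for partial sums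
  have hmgfS : ∀ (n : ℕ) (s : ℝ), |s| ≤ θ/2 →
      mgf (S n) μ s ≤ Real.exp (C * s ^ 2) ^ n := by
    intro n s hs
    rw [hSfun n, hindep.mgf_sum hmeas]
    have heq : ∀ i ∈ Finset.Ico 1 (n+1), mgf (ξ i) μ s = mgf (ξ 1) μ s := by
      intro i _
      have hci : AEStronglyMeasurable (fun x : ℝ => Real.exp (s * x)) (μ.map (ξ i)) :=
        (Real.continuous_exp.comp (continuous_const.mul continuous_id)).aestronglyMeasurable
      have hc1 : AEStronglyMeasurable (fun x : ℝ => Real.exp (s * x)) (μ.map (ξ 1)) :=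
        (Real.continuous_exp.comp (continuous_const.mul continuous_id)).aestronglyMeasurable
      simp only [mgf]
      rw [← integral_map (hmeas i).aemeasurable hci,
        ← integral_map (hmeas 1).aemeasurable hc1, hident i]
    rw [Finset.prod_congr rfl heq, Finset.prod_const, Nat.card_Ico]
    simp only [Nat.add_sub_cancel]
    exact pow_le_pow_left₀ mgf_nonneg (hmgf1 s hs) n
  -- integrability of exp(s * S n)
  have hIntS : ∀ (n : ℕ) (s : ℝ), |s| ≤ θ →
      Integrable (fun ω => Real.exp (s * S n ω)) μ := by
    intro n s hs
    rw [hSfun n]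
    exact hindep.integrable_exp_mul_sum hmeas (fun i _ => hintexp' i s hs)
  -- Chernoff two-sided tail bound
  have htail : ∀ (n : ℕ) (t s : ℝ), 0 ≤ t → 0 ≤ s → s ≤ θ/2 →
      μ {ω | t < |S n ω|} ≤
        ENNReal.ofReal (2 * (Real.exp (-(s*t)) * Real.exp (C*s^2) ^ n)) := by
    intro n t s ht hs0 hs
    have habs : |s| ≤ θ/2 := by rwa [abs_of_nonneg hs0]
    have hsθ : |s| ≤ θ := habs.trans (by linarith)
    have h1 : (μ {ω | t ≤ S n ω}).toReal ≤ Real.exp (-(s*t)) * Real.exp (C*s^2) ^ n := by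
      have h := measure_ge_le_exp_mul_mgf (X := S n) (μ := μ) t hs0 (hIntS n s hsθ)
      rw [neg_mul] at h
      exact h.trans (mul_le_mul_of_nonneg_left (hmgfS n s habs) (Real.exp_pos _).le)
    have h2 : (μ {ω | t ≤ -S n ω}).toReal ≤ Real.exp (-(s*t)) * Real.exp (C*s^2) ^ n := by
      have hnegint : Integrable (fun ω => Real.exp (s * (-S n ω))) μ := by
        have h := hIntS n (-s) (by rwa [abs_neg])
        simp only [neg_mul] at h
        simpa only [mul_neg] using h
      have hch := measure_ge_le_exp_mul_mgf (X := fun ω => -S n ω) (μ := μ) t hs0 hnegint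
      rw [neg_mul] at hch
      have hmgfneg : mgf (fun ω => -S n ω) μ s = mgf (S n) μ (-s) := mgf_neg
      rw [hmgfneg] at hch
      refine hch.trans (mul_le_mul_of_nonneg_left ?_ (Real.exp_pos _).le)
      have h := hmgfS n (-s) (by rwa [abs_neg])
      simpa [neg_sq] using h
    have hsub : {ω | t < |S n ω|} ⊆ {ω | t ≤ S n ω} ∪ {ω | t ≤ -S n ω} := by
      intro ω hω
      simp only [Set.mem_setOf_eq] at hω
      simp only [Set.mem_union, Set.mem_setOf_eq]
      rcases abs_cases (S n ω) with ⟨he, _⟩ | ⟨he, _⟩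
      · rw [he] at hω; exact Or.inl (le_of_lt hω)
      · rw [he] at hω; exact Or.inr (le_of_lt hω)
    calc μ {ω | t < |S n ω|} ≤ μ ({ω | t ≤ S n ω} ∪ {ω | t ≤ -S n ω}) := measure_mono hsub
      _ ≤ μ {ω | t ≤ S n ω} + μ {ω | t ≤ -S n ω} := measure_union_le _ _
      _ ≤ ENNReal.ofReal (Real.exp (-(s*t)) * Real.exp (C*s^2) ^ n) +
          ENNReal.ofReal (Real.exp (-(s*t)) * Real.exp (C*s^2) ^ n) := by
            refine add_le_add ?_ ?_
            · rw [← ENNReal.ofReal_toReal (measure_ne_top μ _)]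
              exact ENNReal.ofReal_le_ofReal h1
            · rw [← ENNReal.ofReal_toReal (measure_ne_top μ _)]
              exact ENNReal.ofReal_le_ofReal h2
      _ = ENNReal.ofReal (2 * (Real.exp (-(s*t)) * Real.exp (C*s^2) ^ n)) := by
            rw [← ENNReal.ofReal_add (by positivity) (by positivity)]
            ring_nf
  -- constants
  set C0 : ℝ := max C 1 with hC0def
  have hC0pos : (0:ℝ) < C0 := lt_of_lt_of_le one_pos (le_max_right _ _)
  have hCC0 : C ≤ C0 := le_max_left _ _
  set c1 : ℝ := θ * ε / 4 with hc1def
  set c2 : ℝ := ε^2 / (4 * C0) with hc2def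
  have hc1pos : 0 < c1 := by positivity
  have hc2pos : 0 < c2 := by positivity
  -- tail bound for the bad sets
  have hA : ∀ n : ℕ, 1 ≤ n →
      μ {ω | ε * (n:ℝ)^((1:ℝ)/2+δ) < |S n ω|} ≤
        ENNReal.ofReal (2 * Real.exp (-(c1 * (n:ℝ)^((1:ℝ)/2+δ)))) +
        ENNReal.ofReal (2 * Real.exp (-(c2 * (n:ℝ)^(2*δ)))) := by
    intro n hn
    have hnp : (0:ℝ) < n := by exact_mod_cast hn
    have hnap : 0 < (n:ℝ)^((1:ℝ)/2+δ) := Real.rpow_pos_of_pos hnp _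
    set na : ℝ := (n:ℝ)^((1:ℝ)/2+δ) with hnadef
    set t : ℝ := ε * na with htdef
    have htp : 0 < t := mul_pos hε hnap
    set s : ℝ := min (θ/2) (t / (2*C0*(n:ℝ))) with hsdef
    have hs0 : 0 ≤ s := le_min (by linarith) (by positivity)
    have hsθ : s ≤ θ/2 := min_le_left _ _
    refine (htail n t s htp.le hs0 hsθ).trans ?_
    have hq : C * s^2 * n ≤ s * t / 2 := by
      have h5 : s ≤ t / (2*C0*(n:ℝ)) := min_le_right _ _
      have h6 : s * (2*C0*(n:ℝ)) ≤ t := by rwa [← le_div_iff₀ (by positivity)]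
      nlinarith [mul_le_mul_of_nonneg_left h6 hs0, sq_nonneg s,
        mul_le_mul_of_nonneg_right hCC0 (mul_nonneg (sq_nonneg s) hnp.le)]
    have hexp1 : Real.exp (-(s*t)) * Real.exp (C*s^2) ^ n = Real.exp (C*s^2*n - s*t) := by
      rw [← Real.exp_nat_mul, ← Real.exp_add]
      ring_nf
    have hhalf : Real.exp (C*s^2*n - s*t) ≤ Real.exp (-(s*t/2)) :=
      Real.exp_le_exp.2 (by linarith)
    have hcases : c1 * na ≤ s*t/2 ∨ c2 * (n:ℝ)^(2*δ) ≤ s*t/2 := by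
      rcases min_cases (θ/2) (t / (2*C0*(n:ℝ))) with ⟨hmin, _⟩ | ⟨hmin, _⟩
      · left
        rw [← hsdef] at hmin
        rw [hmin, htdef, hc1def]
        apply le_of_eq
        ring
      · right
        rw [← hsdef] at hmin
        have hna2 : na^2 = (n:ℝ)^(2*δ) * (n:ℝ) := by
          rw [hnadef, ← Real.rpow_natCast ((n:ℝ)^((1:ℝ)/2+δ)) 2, ← Real.rpow_mul hnp.le]
          have : ((1:ℝ)/2+δ) * (2:ℕ) = 2*δ + 1 := by push_cast; ring
          rw [this, Real.rpow_add hnp, Real.rpow_one]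
        rw [hmin, htdef, hc2def]
        apply le_of_eq
        have hmul : (0:ℝ) < 4 * C0 * (n:ℝ) := by positivity
        refine mul_right_cancel₀ hmul.ne' ?_
        have h8 : ε * na / (2 * C0 * (n:ℝ)) * (ε * na) / 2 * (4 * C0 * (n:ℝ))
            = ε^2 * na^2 := by field_simp; ring
        rw [h8, hna2]
        field_simp
    have hkey : 2 * (Real.exp (-(s*t)) * Real.exp (C*s^2) ^ n) ≤
        2 * Real.exp (-(c1*na)) + 2 * Real.exp (-(c2*(n:ℝ)^(2*δ))) := by
      rw [hexp1]
      rcases hcases with h | h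
      · have h7 : Real.exp (C*s^2*n - s*t) ≤ Real.exp (-(c1*na)) :=
          hhalf.trans (Real.exp_le_exp.2 (by linarith))
        nlinarith [Real.exp_pos (-(c2*(n:ℝ)^(2*δ)))]
      · have h7 : Real.exp (C*s^2*n - s*t) ≤ Real.exp (-(c2*(n:ℝ)^(2*δ))) :=
          hhalf.trans (Real.exp_le_exp.2 (by linarith))
        nlinarith [Real.exp_pos (-(c1*na))]
    calc ENNReal.ofReal (2 * (Real.exp (-(s*t)) * Real.exp (C*s^2) ^ n))
        ≤ ENNReal.ofReal (2 * Real.exp (-(c1*na)) + 2 * Real.exp (-(c2*(n:ℝ)^(2*δ)))) :=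
          ENNReal.ofReal_le_ofReal hkey
      _ = ENNReal.ofReal (2 * Real.exp (-(c1*na))) +
          ENNReal.ofReal (2 * Real.exp (-(c2*(n:ℝ)^(2*δ)))) :=
          ENNReal.ofReal_add (by positivity) (by positivity)
  -- the bad sets
  set A : ℕ → Set Ω := fun n => {ω | ε * (n:ℝ)^((1:ℝ)/2+δ) < |S n ω|} with hAdef
  have hAmeas : ∀ n, MeasurableSet (A n) :=
    fun n => measurableSet_lt measurable_const (hSmeas n).abs
  -- fourth moment of a single variable
  set M4 : ℝ≥0∞ := ∫⁻ ω, (ENNReal.ofReal |ξ 1 ω|) ^ (4:ℕ) ∂μ with hM4def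
  have hM4fin : M4 < ⊤ := by
    have hb : ∀ x : ℝ, |x| ^ 4 ≤ (θ/4)⁻¹ ^ 4 * Real.exp (θ * |x|) := by
      intro x
      have h := aux_pow_le_exp (show (0:ℝ) < θ/4 by linarith) (abs_nonneg x) 4
      have h2 : ((4:ℕ):ℝ) * (θ/4 * |x|) = θ * |x| := by push_cast; ring
      rwa [h2] at h
    have hc1 : M4 = ∫⁻ ω, ENNReal.ofReal (|ξ 1 ω| ^ 4) ∂μ := by
      rw [hM4def]
      exact lintegral_congr fun ω => (ENNReal.ofReal_pow (abs_nonneg _) 4).symm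
    rw [hc1]
    have hle : ∫⁻ ω, ENNReal.ofReal (|ξ 1 ω| ^ 4) ∂μ
        ≤ ENNReal.ofReal ((θ/4)⁻¹ ^ 4) * ∫⁻ ω, ENNReal.ofReal (Real.exp (θ * |ξ 1 ω|)) ∂μ := by
      rw [← lintegral_const_mul' _ _ ENNReal.ofReal_ne_top]
      refine lintegral_mono fun ω => ?_
      rw [← ENNReal.ofReal_mul (by positivity)]
      exact ENNReal.ofReal_le_ofReal (hb _)
    refine lt_of_le_of_lt hle (ENNReal.mul_lt_top ENNReal.ofReal_lt_top ?_)
    have hfi := hexp.hasFiniteIntegral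
    rw [hasFiniteIntegral_iff_norm] at hfi
    have : ∀ ω : Ω, ENNReal.ofReal ‖Real.exp (θ * |ξ 1 ω|)‖
        = ENNReal.ofReal (Real.exp (θ * |ξ 1 ω|)) := by
      intro ω
      rw [Real.norm_eq_abs, abs_of_pos (Real.exp_pos _)]
    rwa [lintegral_congr this] at hfi
  -- fourth moment of the partial sums
  have hmom4 : ∀ n : ℕ, ∫⁻ ω, (ENNReal.ofReal |S n ω|) ^ (4:ℕ) ∂μ ≤ (n:ℝ≥0∞) ^ 4 * M4 := by
    intro n
    rcases Nat.eq_zero_or_pos n with rfl | hn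
    · have hz : ∀ ω, S 0 ω = 0 := fun ω => by rw [hS]; simp
      have : ∀ ω : Ω, (ENNReal.ofReal |S 0 ω|) ^ (4:ℕ) = 0 := by
        intro ω; rw [hz ω]; simp
      rw [lintegral_congr this]
      simp
    have hnp : (0:ℝ) < n := by exact_mod_cast hn
    have hpt : ∀ ω, |S n ω| ^ 4 ≤ (n:ℝ) ^ 3 * ∑ i ∈ Finset.range n, |ξ (i+1) ω| ^ 4 := by
      intro ω
      have h1 : |S n ω| ≤ ∑ i ∈ Finset.range n, |ξ (i+1) ω| := by
        rw [hS]; exact Finset.abs_sum_le_sum_abs _ _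
      have h2 : |S n ω| ^ 4 ≤ (∑ i ∈ Finset.range n, |ξ (i+1) ω|) ^ 4 :=
        pow_le_pow_left₀ (abs_nonneg _) h1 4
      have h3 := pow_sum_div_card_le_sum_pow (s := Finset.range n)
        (f := fun i => |ξ (i+1) ω|) (fun i _ => abs_nonneg _) 3
      rw [Finset.card_range] at h3
      rw [div_le_iff₀ (by positivity)] at h3
      calc |S n ω| ^ 4 ≤ (∑ i ∈ Finset.range n, |ξ (i+1) ω|) ^ (3+1) := h2
        _ ≤ (∑ i ∈ Finset.range n, |ξ (i+1) ω| ^ (3+1)) * (n:ℝ) ^ 3 := h3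
        _ = (n:ℝ) ^ 3 * ∑ i ∈ Finset.range n, |ξ (i+1) ω| ^ 4 := by ring
    calc ∫⁻ ω, (ENNReal.ofReal |S n ω|) ^ (4:ℕ) ∂μ
        = ∫⁻ ω, ENNReal.ofReal (|S n ω| ^ 4) ∂μ :=
          lintegral_congr fun ω => (ENNReal.ofReal_pow (abs_nonneg _) 4).symm
      _ ≤ ∫⁻ ω, ENNReal.ofReal ((n:ℝ) ^ 3 * ∑ i ∈ Finset.range n, |ξ (i+1) ω| ^ 4) ∂μ :=
          lintegral_mono fun ω => ENNReal.ofReal_le_ofReal (hpt ω)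
      _ = ENNReal.ofReal ((n:ℝ) ^ 3) *
            ∫⁻ ω, ENNReal.ofReal (∑ i ∈ Finset.range n, |ξ (i+1) ω| ^ 4) ∂μ := by
          rw [← lintegral_const_mul' _ _ ENNReal.ofReal_ne_top]
          exact lintegral_congr fun ω => ENNReal.ofReal_mul (by positivity)
      _ = ENNReal.ofReal ((n:ℝ) ^ 3) *
            ∑ i ∈ Finset.range n, ∫⁻ ω, ENNReal.ofReal (|ξ (i+1) ω| ^ 4) ∂μ := by
          congr 1
          rw [← lintegral_finset_sum]
          · exact lintegral_congr fun ω =>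
              ENNReal.ofReal_sum_of_nonneg (fun i _ => by positivity)
          · intro i _
            exact ENNReal.measurable_ofReal.comp (((hmeas (i+1)).abs).pow_const 4)
      _ = ENNReal.ofReal ((n:ℝ) ^ 3) * ∑ i ∈ Finset.range n, M4 := by
          congr 1
          refine Finset.sum_congr rfl fun i _ => ?_
          have hmono := hlint (i+1) (fun x => ENNReal.ofReal (|x| ^ 4))
            (ENNReal.measurable_ofReal.comp ((measurable_id.abs).pow_const 4))
          rw [hmono]
          rw [hM4def]
          exact lintegral_congr fun ω => (ENNReal.ofReal_pow (abs_nonneg _) 4)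
      _ = (n:ℝ≥0∞) ^ 4 * M4 := by
          rw [Finset.sum_const, Finset.card_range, nsmul_eq_mul,
            ENNReal.ofReal_pow (by positivity), ENNReal.ofReal_natCast]
          ring
  -- Cauchy-Schwarz step
  have hconj : Real.HolderConjugate 2 2 := Real.holderConjugate_iff.mpr ⟨one_lt_two, by norm_num⟩
  have hT : ∀ n : ℕ, ∫⁻ ω, (A n).indicator (fun ω => (ENNReal.ofReal |S n ω|) ^ (2:ℕ)) ω ∂μ
      ≤ (n:ℝ≥0∞) ^ 2 * M4 ^ ((1:ℝ)/2) * (μ (A n)) ^ ((1:ℝ)/2) := by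
    intro n
    have hfmeas : Measurable (fun ω => (ENNReal.ofReal |S n ω|) ^ (2:ℕ)) :=
      (ENNReal.measurable_ofReal.comp (hSmeas n).abs).pow_const 2
    have hgmeas : Measurable ((A n).indicator (fun _ => (1:ℝ≥0∞))) :=
      measurable_const.indicator (hAmeas n)
    have hprod : ∀ ω, (A n).indicator (fun ω => (ENNReal.ofReal |S n ω|) ^ (2:ℕ)) ω
        = ((fun ω => (ENNReal.ofReal |S n ω|) ^ (2:ℕ)) *
            ((A n).indicator (fun _ => (1:ℝ≥0∞)))) ω := by
      intro ω
      by_cases h : ω ∈ A n <;>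
        simp [Set.indicator_of_mem, Set.indicator_of_notMem, h]
    have hholder := ENNReal.lintegral_mul_le_Lp_mul_Lq μ hconj
      hfmeas.aemeasurable hgmeas.aemeasurable
    have hf4 : ∀ ω : Ω, ((ENNReal.ofReal |S n ω|) ^ (2:ℕ)) ^ (2:ℝ)
        = (ENNReal.ofReal |S n ω|) ^ (4:ℕ) := by
      intro ω
      rw [← ENNReal.rpow_natCast (ENNReal.ofReal |S n ω|) 2, ← ENNReal.rpow_mul,
        ← ENNReal.rpow_natCast (ENNReal.ofReal |S n ω|) 4]
      norm_num
    have hg2 : ∀ ω : Ω, ((A n).indicator (fun _ => (1:ℝ≥0∞)) ω) ^ (2:ℝ)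
        = (A n).indicator (fun _ => (1:ℝ≥0∞)) ω := by
      intro ω
      by_cases h : ω ∈ A n <;>
        simp [Set.indicator_of_mem, Set.indicator_of_notMem, h,
          ENNReal.zero_rpow_of_pos, ENNReal.one_rpow]
    have hgint : ∫⁻ ω, ((A n).indicator (fun _ => (1:ℝ≥0∞)) ω) ^ (2:ℝ) ∂μ = μ (A n) := by
      rw [lintegral_congr hg2]
      exact lintegral_indicator_one (hAmeas n)
    calc ∫⁻ ω, (A n).indicator (fun ω => (ENNReal.ofReal |S n ω|) ^ (2:ℕ)) ω ∂μ
        = ∫⁻ ω, ((fun ω => (ENNReal.ofReal |S n ω|) ^ (2:ℕ)) *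
            ((A n).indicator (fun _ => (1:ℝ≥0∞)))) ω ∂μ := lintegral_congr hprod
      _ ≤ (∫⁻ ω, ((ENNReal.ofReal |S n ω|) ^ (2:ℕ)) ^ (2:ℝ) ∂μ) ^ ((1:ℝ)/2) *
          (∫⁻ ω, ((A n).indicator (fun _ => (1:ℝ≥0∞)) ω) ^ (2:ℝ) ∂μ) ^ ((1:ℝ)/2) := hholder
      _ = (∫⁻ ω, (ENNReal.ofReal |S n ω|) ^ (4:ℕ) ∂μ) ^ ((1:ℝ)/2) * (μ (A n)) ^ ((1:ℝ)/2) := by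
          rw [lintegral_congr hf4, hgint]
      _ ≤ ((n:ℝ≥0∞) ^ 4 * M4) ^ ((1:ℝ)/2) * (μ (A n)) ^ ((1:ℝ)/2) := by
          exact mul_le_mul_left (ENNReal.rpow_le_rpow (hmom4 n) (by norm_num)) _
      _ = (n:ℝ≥0∞) ^ 2 * M4 ^ ((1:ℝ)/2) * (μ (A n)) ^ ((1:ℝ)/2) := by
          rw [ENNReal.mul_rpow_of_nonneg _ _ (by norm_num : (0:ℝ) ≤ 1/2)]
          congr 2
          rw [← ENNReal.rpow_natCast (n:ℝ≥0∞) 4, ← ENNReal.rpow_mul,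
            ← ENNReal.rpow_natCast (n:ℝ≥0∞) 2]
          norm_num
  -- summability of the dominating series
  have hsummable : ∀ (c β : ℝ), 0 < c → 0 < β →
      (∑' n : ℕ, (n:ℝ≥0∞)^2 *
        (ENNReal.ofReal (2 * Real.exp (-(c * (n:ℝ)^β))))^((1:ℝ)/2)) ≠ ⊤ := by
    intro c β hcpos hβ
    have hpt : ∀ n : ℕ, (n:ℝ≥0∞)^2 *
        (ENNReal.ofReal (2 * Real.exp (-(c * (n:ℝ)^β))))^((1:ℝ)/2)
        ≤ ENNReal.ofReal ((n:ℝ)^2 * (2 * Real.exp (-(c/2 * (n:ℝ)^β)))) := by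
      intro n
      have h1 : (ENNReal.ofReal (2 * Real.exp (-(c * (n:ℝ)^β))))^((1:ℝ)/2)
          = ENNReal.ofReal ((2 * Real.exp (-(c * (n:ℝ)^β)))^((1:ℝ)/2)) :=
        ENNReal.ofReal_rpow_of_nonneg (by positivity) (by norm_num)
      have h2 : (2 * Real.exp (-(c * (n:ℝ)^β)))^((1:ℝ)/2)
          ≤ 2 * Real.exp (-(c/2 * (n:ℝ)^β)) := by
        rw [Real.mul_rpow (by norm_num) (Real.exp_pos _).le]
        have h3 : (2:ℝ)^((1:ℝ)/2) ≤ 2 := by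
          calc (2:ℝ)^((1:ℝ)/2) ≤ (2:ℝ)^(1:ℝ) :=
                Real.rpow_le_rpow_of_exponent_le (by norm_num) (by norm_num)
            _ = 2 := Real.rpow_one 2
        have h4 : Real.exp (-(c * (n:ℝ)^β)) ^ ((1:ℝ)/2)
            = Real.exp (-(c/2 * (n:ℝ)^β)) := by
          rw [← Real.exp_mul]
          ring_nf
        rw [h4]
        exact mul_le_mul_of_nonneg_right h3 (Real.exp_pos _).le
      calc (n:ℝ≥0∞)^2 * (ENNReal.ofReal (2 * Real.exp (-(c * (n:ℝ)^β))))^((1:ℝ)/2)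
          = ENNReal.ofReal ((n:ℝ)^2) *
            ENNReal.ofReal ((2 * Real.exp (-(c * (n:ℝ)^β)))^((1:ℝ)/2)) := by
            rw [h1, ENNReal.ofReal_pow (by positivity), ENNReal.ofReal_natCast]
        _ = ENNReal.ofReal ((n:ℝ)^2 * (2 * Real.exp (-(c * (n:ℝ)^β)))^((1:ℝ)/2)) :=
            (ENNReal.ofReal_mul (by positivity)).symm
        _ ≤ ENNReal.ofReal ((n:ℝ)^2 * (2 * Real.exp (-(c/2 * (n:ℝ)^β)))) :=
            ENNReal.ofReal_le_ofReal (mul_le_mul_of_nonneg_left h2 (by positivity))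
    refine ne_top_of_le_ne_top ?_ (ENNReal.tsum_le_tsum hpt)
    have hsum : Summable (fun n : ℕ => (n:ℝ)^2 * (2 * Real.exp (-(c/2 * (n:ℝ)^β)))) := by
      have h := (aux_summable (show (0:ℝ) < c/2 by linarith) hβ).mul_left 2
      exact h.congr (fun n => by ring)
    simp only [ENNReal.ofReal]
    exact ENNReal.tsum_coe_ne_top_iff_summable.2 hsum.toNNReal
  -- summing up the truncated second moments
  have hDsum : (∑' n : ℕ,
      ∫⁻ ω, (A n).indicator (fun ω => (ENNReal.ofReal |S n ω|) ^ (2:ℕ)) ω ∂μ) < ⊤ := by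
    have hTD : ∀ n : ℕ,
        (∫⁻ ω, (A n).indicator (fun ω => (ENNReal.ofReal |S n ω|) ^ (2:ℕ)) ω ∂μ)
        ≤ M4 ^ ((1:ℝ)/2) *
          ((n:ℝ≥0∞)^2 * (ENNReal.ofReal (2 * Real.exp (-(c1 * (n:ℝ)^((1:ℝ)/2+δ)))))^((1:ℝ)/2)
           + (n:ℝ≥0∞)^2 * (ENNReal.ofReal (2 * Real.exp (-(c2 * (n:ℝ)^(2*δ)))))^((1:ℝ)/2)) := by
      intro n
      rcases Nat.eq_zero_or_pos n with rfl | hn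
      · refine le_trans (hT 0) ?_
        norm_num
      · refine le_trans (hT n) ?_
        have h6 : (μ (A n))^((1:ℝ)/2) ≤
            (ENNReal.ofReal (2 * Real.exp (-(c1 * (n:ℝ)^((1:ℝ)/2+δ)))))^((1:ℝ)/2)
            + (ENNReal.ofReal (2 * Real.exp (-(c2 * (n:ℝ)^(2*δ)))))^((1:ℝ)/2) :=
          le_trans (ENNReal.rpow_le_rpow (hA n hn) (by norm_num))
            (ENNReal.rpow_add_le_add_rpow _ _ (by norm_num) (by norm_num))
        calc (n:ℝ≥0∞)^2 * M4^((1:ℝ)/2) * (μ (A n))^((1:ℝ)/2)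
            ≤ (n:ℝ≥0∞)^2 * M4^((1:ℝ)/2) *
              ((ENNReal.ofReal (2 * Real.exp (-(c1 * (n:ℝ)^((1:ℝ)/2+δ)))))^((1:ℝ)/2)
               + (ENNReal.ofReal (2 * Real.exp (-(c2 * (n:ℝ)^(2*δ)))))^((1:ℝ)/2)) :=
              mul_le_mul_right h6 _
          _ = M4 ^ ((1:ℝ)/2) *
              ((n:ℝ≥0∞)^2 * (ENNReal.ofReal (2 * Real.exp (-(c1 * (n:ℝ)^((1:ℝ)/2+δ)))))^((1:ℝ)/2)
               + (n:ℝ≥0∞)^2 * (ENNReal.ofReal (2 * Real.exp (-(c2 * (n:ℝ)^(2*δ)))))^((1:ℝ)/2)) := by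
              ring
    refine lt_of_le_of_lt (ENNReal.tsum_le_tsum hTD) ?_
    rw [ENNReal.tsum_mul_left]
    refine ENNReal.mul_lt_top (ENNReal.rpow_lt_top_of_nonneg (by norm_num) hM4fin.ne) ?_
    rw [ENNReal.tsum_add]
    refine ENNReal.add_lt_top.2 ⟨?_, ?_⟩
    · exact lt_top_iff_ne_top.2 (hsummable c1 ((1:ℝ)/2+δ) hc1pos (by linarith))
    · exact lt_top_iff_ne_top.2 (hsummable c2 (2*δ) hc2pos (by linarith))
  -- the dominating random variable
  have hgm : ∀ n : ℕ, Measurable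
      (fun ω => (A n).indicator (fun ω => (ENNReal.ofReal |S n ω|) ^ (2:ℕ)) ω) := by
    intro n
    exact Measurable.indicator
      ((ENNReal.measurable_ofReal.comp (hSmeas n).abs).pow_const 2) (hAmeas n)
  set G : Ω → ℝ≥0∞ :=
    fun ω => ∑' n : ℕ, (A n).indicator (fun ω => (ENNReal.ofReal |S n ω|) ^ (2:ℕ)) ω
    with hGdef
  have hGmeas : Measurable G := Measurable.ennreal_tsum hgm
  have hGlt : ∫⁻ ω, G ω ∂μ < ⊤ := by
    have h1 : ∫⁻ ω, G ω ∂μ = ∑' n : ℕ,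
        ∫⁻ ω, (A n).indicator (fun ω => (ENNReal.ofReal |S n ω|) ^ (2:ℕ)) ω ∂μ := by
      rw [hGdef]
      exact lintegral_tsum (fun n => (hgm n).aemeasurable)
    rw [h1]
    exact hDsum
  have hae : ∀ᵐ ω ∂μ, G ω < ⊤ := ae_lt_top hGmeas hGlt.ne
  refine ⟨fun ω => Real.sqrt ((G ω).toReal), fun ω => Real.sqrt_nonneg _, ?_, ?_⟩
  · have hKeq : (fun ω => (Real.sqrt ((G ω).toReal)) ^ 2) = fun ω => (G ω).toReal :=
      funext fun ω => Real.sq_sqrt ENNReal.toReal_nonneg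
    rw [hKeq]
    refine ⟨(hGmeas.ennreal_toReal).aestronglyMeasurable, ?_⟩
    rw [hasFiniteIntegral_iff_norm]
    refine lt_of_le_of_lt (lintegral_mono fun ω => ?_) hGlt
    rw [Real.norm_eq_abs, abs_of_nonneg ENNReal.toReal_nonneg]
    exact ENNReal.ofReal_toReal_le
  · filter_upwards [hae] with ω hω
    intro n hn
    have hKnn : 0 ≤ Real.sqrt ((G ω).toReal) := Real.sqrt_nonneg _
    have hrnn : 0 ≤ ε * (n:ℝ)^((1:ℝ)/2+δ) :=
      mul_nonneg hε.le (Real.rpow_nonneg (Nat.cast_nonneg n) _)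
    by_cases hmem : ω ∈ A n
    · have hle : (ENNReal.ofReal |S n ω|) ^ (2:ℕ) ≤ G ω := by
        have h1 : (A n).indicator (fun ω => (ENNReal.ofReal |S n ω|) ^ (2:ℕ)) ω
            = (ENNReal.ofReal |S n ω|) ^ (2:ℕ) := Set.indicator_of_mem hmem _
        rw [hGdef]
        exact h1 ▸ ENNReal.le_tsum n
      have h2 : |S n ω| ^ 2 ≤ (G ω).toReal := by
        have h3 := ENNReal.toReal_mono hω.ne hle
        rwa [ENNReal.toReal_pow, ENNReal.toReal_ofReal (abs_nonneg _)] at h3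
      have h4 : |S n ω| ≤ Real.sqrt ((G ω).toReal) := by
        have h5 := Real.sqrt_le_sqrt h2
        rwa [Real.sqrt_sq (abs_nonneg _)] at h5
      linarith
    · have h1 : ¬ (ε * (n:ℝ)^((1:ℝ)/2+δ) < |S n ω|) := by
        simpa [hAdef, Set.mem_setOf_eq] using hmem
      push_neg at h1
      linarith
end

section
/- Let (S_n)_{n≥0} be a martingale with S_0 = 0 and increments ξ_n = S_n − S_{n−1} satisfying |ξ_n| ≤ C almost surely for a constant C > 0. Then for every ε > 0 and δ ∈ (0, 1/4) there exists a random variable K ≥ 0 with E[K²] < ∞ such that almost surely |S_n| ≤ K + ε n^{1/2+δ} for all n ≥ 1. -/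
open MeasureTheory ProbabilityTheory Filter Real Topology
open scoped ENNReal

-- pointwise convexity bound
lemma exp_le_cosh_add {C x t : ℝ} (hC : 0 < C) (hx : |x| ≤ C) :
    Real.exp (t * x) ≤ Real.cosh (t * C) + (Real.sinh (t * C) / C) * x := by
  obtain ⟨hx1, hx2⟩ := abs_le.mp hx
  have key := convexOn_exp.2 (Set.mem_univ (t * C)) (Set.mem_univ (-(t * C)))
      (show (0:ℝ) ≤ (C + x) / (2 * C) by apply div_nonneg <;> nlinarith)
      (show (0:ℝ) ≤ (C - x) / (2 * C) by apply div_nonneg <;> nlinarith)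
      (show (C + x) / (2 * C) + (C - x) / (2 * C) = 1 by field_simp; ring)
  have hx' : ((C + x) / (2 * C)) • (t * C) + ((C - x) / (2 * C)) • (-(t * C)) = t * x := by
    simp only [smul_eq_mul]
    field_simp
    ring
  rw [hx'] at key
  refine key.trans (le_of_eq ?_)
  rw [Real.cosh_eq, Real.sinh_eq, Real.exp_neg, smul_eq_mul, smul_eq_mul]
  field_simp
  ring

-- a.e. bound on |S n|
lemma abs_S_le {Ω : Type*} {m : MeasurableSpace Ω} {μ : Measure Ω}
    {S : ℕ → Ω → ℝ} (hS0 : ∀ᵐ ω ∂μ, S 0 ω = 0) {C : ℝ}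
    (hbdd : ∀ n : ℕ, ∀ᵐ ω ∂μ, |S (n + 1) ω - S n ω| ≤ C) (n : ℕ) :
    ∀ᵐ ω ∂μ, |S n ω| ≤ C * n := by
  induction n with
  | zero => filter_upwards [hS0] with ω h; simp [h]
  | succ k ih =>
    filter_upwards [ih, hbdd k] with ω h1 h2
    have : |S (k+1) ω| ≤ |S k ω| + |S (k+1) ω - S k ω| := by
      have := abs_add_le (S k ω) (S (k+1) ω - S k ω); simpa using this
    push_cast
    nlinarith



section
variable {Ω : Type*} {m : MeasurableSpace Ω} {μ : Measure Ω} [IsProbabilityMeasure μ]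
  {ℱ : Filtration ℕ m} {S : ℕ → Ω → ℝ} {C : ℝ}

-- integrability of exp(t S n)
lemma integrable_exp_S (hmart : Martingale S ℱ μ)
    (hS0 : ∀ᵐ ω ∂μ, S 0 ω = 0)
    (hbdd : ∀ n : ℕ, ∀ᵐ ω ∂μ, |S (n + 1) ω - S n ω| ≤ C) (t : ℝ) (n : ℕ) :
    Integrable (fun ω => Real.exp (t * S n ω)) μ := by
  have habs : ∀ᵐ ω ∂μ, |S n ω| ≤ C * n := abs_S_le hS0 hbdd n
  have hmeas : AEStronglyMeasurable (fun ω => Real.exp (t * S n ω)) μ :=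
    (Real.measurable_exp.comp
      ((measurable_const.mul ((hmart.stronglyAdapted n).mono (ℱ.le n)).measurable))).aestronglyMeasurable
  refine Integrable.mono' (integrable_const (Real.exp (|t| * (C * n)))) hmeas ?_
  filter_upwards [habs] with ω h
  rw [Real.norm_eq_abs, Real.abs_exp, Real.exp_le_exp]
  calc t * S n ω ≤ |t * S n ω| := le_abs_self _
    _ = |t| * |S n ω| := abs_mul _ _
    _ ≤ |t| * (C * n) := by gcongr

lemma integral_mul_increment (hmart : Martingale S ℱ μ) (n : ℕ)
    (f : Ω → ℝ) (hf : StronglyMeasurable[ℱ n] f)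
    (hfξ : Integrable (fun ω => f ω * (S (n+1) ω - S n ω)) μ) :
    ∫ ω, f ω * (S (n+1) ω - S n ω) ∂μ = 0 := by
  set ξ : Ω → ℝ := fun ω => S (n+1) ω - S n ω with hξ
  have hintξ : Integrable ξ μ := (hmart.integrable (n+1)).sub (hmart.integrable n)
  have hcond : μ[ξ | ℱ n] =ᵐ[μ] 0 := by
    have h1 : μ[fun ω => S (n+1) ω - S n ω | ℱ n] =ᵐ[μ]
        μ[S (n+1) | ℱ n] - μ[S n | ℱ n] :=
      condExp_sub (hmart.integrable (n+1)) (hmart.integrable n) _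
    have h2 : μ[S (n+1) | ℱ n] =ᵐ[μ] S n := hmart.condExp_ae_eq (Nat.le_succ n)
    have h3 : μ[S n | ℱ n] = S n :=
      condExp_of_stronglyMeasurable (ℱ.le n) (hmart.stronglyAdapted n) (hmart.integrable n)
    filter_upwards [h1, h2] with ω e1 e2
    simp only [hξ, e1, Pi.sub_apply, e2, h3, Pi.zero_apply, sub_self]
  have hpull : μ[fun ω => f ω * ξ ω | ℱ n] =ᵐ[μ] fun ω => f ω * (μ[ξ | ℱ n]) ω :=
    condExp_mul_of_stronglyMeasurable_left hf hfξ hintξ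
  calc ∫ ω, f ω * ξ ω ∂μ = ∫ ω, (μ[fun ω => f ω * ξ ω | ℱ n]) ω ∂μ :=
        (integral_condExp (ℱ.le n)).symm
    _ = 0 := by
        rw [integral_congr_ae (hpull.trans ?_), integral_zero]
        filter_upwards [hcond] with ω h
        simp [h]

lemma mgf_S_le (hmart : Martingale S ℱ μ) (hS0 : ∀ᵐ ω ∂μ, S 0 ω = 0) (hC : 0 < C)
    (hbdd : ∀ n : ℕ, ∀ᵐ ω ∂μ, |S (n + 1) ω - S n ω| ≤ C) (t : ℝ) (n : ℕ) :
    ∫ ω, Real.exp (t * S n ω) ∂μ ≤ Real.cosh (t * C) ^ n := by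
  induction n with
  | zero =>
    have : ∫ ω, Real.exp (t * S 0 ω) ∂μ = 1 := by
      rw [integral_congr_ae (g := fun _ => (1:ℝ)) ?_]
      · simp
      · filter_upwards [hS0] with ω h; simp [h]
    simp [this]
  | succ k ih =>
    set ξ : Ω → ℝ := fun ω => S (k+1) ω - S k ω with hξdef
    set f : Ω → ℝ := fun ω => Real.exp (t * S k ω) with hfdef
    have hfmeas : StronglyMeasurable[ℱ k] f :=
      (Real.continuous_exp.comp_stronglyMeasurable ((hmart.stronglyAdapted k).const_mul t))
    have habs : ∀ᵐ ω ∂μ, |S k ω| ≤ C * k := abs_S_le hS0 hbdd k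
    have hfbd : ∀ᵐ ω ∂μ, |f ω| ≤ Real.exp (|t| * (C * k)) := by
      filter_upwards [habs] with ω h
      rw [Real.abs_exp, Real.exp_le_exp]
      calc t * S k ω ≤ |t * S k ω| := le_abs_self _
        _ = |t| * |S k ω| := abs_mul _ _
        _ ≤ |t| * (C * k) := by gcongr
    have hξmeas : AEStronglyMeasurable ξ μ := by
      rw [hξdef]
      exact ((((hmart.stronglyAdapted (k+1)).mono (ℱ.le (k+1))).measurable.sub
          ((hmart.stronglyAdapted k).mono (ℱ.le k)).measurable)).aestronglyMeasurable
    have hfξ : Integrable (fun ω => f ω * ξ ω) μ := by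
      refine Integrable.mono' (integrable_const (Real.exp (|t| * (C * k)) * C))
        ((hfmeas.mono (ℱ.le k)).aestronglyMeasurable.mul hξmeas) ?_
      filter_upwards [hfbd, hbdd k] with ω h1 h2
      rw [Real.norm_eq_abs, abs_mul]
      have : 0 ≤ |f ω| := abs_nonneg _
      exact mul_le_mul h1 h2 (abs_nonneg _) (Real.exp_pos _).le
    have hzero : ∫ ω, f ω * ξ ω ∂μ = 0 := integral_mul_increment hmart k f hfmeas hfξ
    -- pointwise bound
    have hptwise : ∀ᵐ ω ∂μ, Real.exp (t * S (k+1) ω) ≤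
        Real.cosh (t * C) * f ω + (Real.sinh (t * C) / C) * (f ω * ξ ω) := by
      filter_upwards [hbdd k] with ω h
      have h1 : Real.exp (t * S (k+1) ω) = f ω * Real.exp (t * ξ ω) := by
        rw [hfdef, ← Real.exp_add]
        congr 1
        simp [hξdef]; ring
      rw [h1]
      have h2 : Real.exp (t * ξ ω) ≤ Real.cosh (t * C) + (Real.sinh (t * C) / C) * ξ ω :=
        exp_le_cosh_add hC h
      have hf0 : 0 ≤ f ω := (Real.exp_pos _).le
      nlinarith [mul_le_mul_of_nonneg_left h2 hf0]
    have hintf : Integrable f μ := integrable_exp_S hmart hS0 hbdd t k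
    have hrhs : Integrable (fun ω => Real.cosh (t * C) * f ω
        + (Real.sinh (t * C) / C) * (f ω * ξ ω)) μ :=
      (hintf.const_mul _).add (hfξ.const_mul _)
    calc ∫ ω, Real.exp (t * S (k+1) ω) ∂μ
        ≤ ∫ ω, (Real.cosh (t * C) * f ω + (Real.sinh (t * C) / C) * (f ω * ξ ω)) ∂μ :=
          integral_mono_ae (integrable_exp_S hmart hS0 hbdd t (k+1)) hrhs hptwise
      _ = Real.cosh (t * C) * ∫ ω, f ω ∂μ := by
          rw [integral_add (hintf.const_mul _) (hfξ.const_mul _), integral_const_mul,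
            integral_const_mul, hzero, mul_zero, add_zero]
      _ ≤ Real.cosh (t * C) * Real.cosh (t * C) ^ k := by
          exact mul_le_mul_of_nonneg_left ih (Real.cosh_pos _).le
      _ = Real.cosh (t * C) ^ (k+1) := by ring

lemma summable_aux {c r : ℝ} (hc : 0 < c) (hr : 0 < r) :
    Summable (fun n : ℕ => (n : ℝ) * Real.exp (-c * (n : ℝ) ^ r)) := by
  have h0 : Tendsto (fun x : ℝ => x ^ (3 / r) * Real.exp (-c * x)) atTop (𝓝 0) :=
    tendsto_rpow_mul_exp_neg_mul_atTop_nhds_zero (3 / r) c hc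
  have h1 : Tendsto (fun n : ℕ => (n : ℝ) ^ (3:ℝ) * Real.exp (-c * (n : ℝ) ^ r)) atTop (𝓝 0) := by
    have := h0.comp ((tendsto_rpow_atTop hr).comp tendsto_natCast_atTop_atTop)
    refine this.congr (fun n => ?_)
    simp only [Function.comp_apply]
    congr 1
    rw [← Real.rpow_mul (Nat.cast_nonneg n)]
    congr 1
    field_simp
  have h2 : ∀ᶠ n : ℕ in atTop, (n : ℝ) ^ (3:ℝ) * Real.exp (-c * (n : ℝ) ^ r) ≤ 1 :=
    (h1.eventually (eventually_le_nhds (by norm_num : (0:ℝ) < 1)))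
  have h3 : ∀ᶠ n : ℕ in atTop,
      ‖(n : ℝ) * Real.exp (-c * (n : ℝ) ^ r)‖ ≤ 1 * ‖1 / (n:ℝ)^(2:ℕ)‖ := by
    filter_upwards [h2, eventually_ge_atTop 1] with n hn hn1
    have hnpos : (0:ℝ) < n := by exact_mod_cast hn1
    rw [Real.norm_eq_abs, Real.norm_eq_abs, one_mul, abs_of_nonneg (by positivity),
      abs_of_nonneg (by positivity)]
    rw [le_div_iff₀ (by positivity)]
    calc (n:ℝ) * Real.exp (-c * (n:ℝ)^r) * (n:ℝ)^(2:ℕ)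
        = (n:ℝ)^(3:ℝ) * Real.exp (-c * (n:ℝ)^r) := by
          rw [show ((3:ℝ)) = ((3:ℕ):ℝ) by norm_num, Real.rpow_natCast]
          ring
      _ ≤ 1 := hn
  exact summable_of_isBigO_nat (summable_one_div_nat_pow.mpr (by norm_num))
    (Asymptotics.isBigO_iff.mpr ⟨1, h3⟩)

lemma tail_one_sided (hmart : Martingale S ℱ μ) (hS0 : ∀ᵐ ω ∂μ, S 0 ω = 0) (hC : 0 < C)
    (hbdd : ∀ n : ℕ, ∀ᵐ ω ∂μ, |S (n + 1) ω - S n ω| ≤ C) {n : ℕ} (hn : 1 ≤ n)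
    {a : ℝ} (ha : 0 < a) :
    (μ {ω | a ≤ S n ω}).toReal ≤ Real.exp (-(a ^ 2) / (2 * C ^ 2 * n)) := by
  have hnR : (0:ℝ) < n := by exact_mod_cast hn
  set t := a / (C ^ 2 * n) with htdef
  have ht : 0 ≤ t := by positivity
  have h1 := measure_ge_le_exp_mul_mgf (X := S n) (μ := μ) a ht
    (integrable_exp_S hmart hS0 hbdd t n)
  refine h1.trans ?_
  have h2 : mgf (S n) μ t ≤ Real.cosh (t * C) ^ n := mgf_S_le hmart hS0 hC hbdd t n
  calc Real.exp (-t * a) * mgf (S n) μ t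
      ≤ Real.exp (-t * a) * Real.cosh (t * C) ^ n :=
        mul_le_mul_of_nonneg_left h2 (Real.exp_pos _).le
    _ ≤ Real.exp (-t * a) * (Real.exp ((t * C) ^ 2 / 2)) ^ n := by
        refine mul_le_mul_of_nonneg_left ?_ (Real.exp_pos _).le
        exact pow_le_pow_left₀ (Real.cosh_pos _).le (Real.cosh_le_exp_half_sq _) n
    _ = Real.exp (-t * a + n * ((t * C) ^ 2 / 2)) := by
        rw [← Real.exp_nat_mul, ← Real.exp_add]
    _ = Real.exp (-(a ^ 2) / (2 * C ^ 2 * n)) := by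
        congr 1
        rw [htdef]
        field_simp
        ring

lemma tail_abs (hmart : Martingale S ℱ μ) (hS0 : ∀ᵐ ω ∂μ, S 0 ω = 0) (hC : 0 < C)
    (hbdd : ∀ n : ℕ, ∀ᵐ ω ∂μ, |S (n + 1) ω - S n ω| ≤ C) {n : ℕ} (hn : 1 ≤ n)
    {a : ℝ} (ha : 0 < a) :
    (μ {ω | a ≤ |S n ω|}).toReal ≤ 2 * Real.exp (-(a ^ 2) / (2 * C ^ 2 * n)) := by
  have hneg : Martingale (fun k => -(S k)) ℱ μ := hmart.neg
  have hS0' : ∀ᵐ ω ∂μ, (fun k => -(S k)) 0 ω = 0 := by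
    filter_upwards [hS0] with ω h; simp [h]
  have hbdd' : ∀ k : ℕ, ∀ᵐ ω ∂μ, |(fun k => -(S k)) (k+1) ω - (fun k => -(S k)) k ω| ≤ C := by
    intro k
    filter_upwards [hbdd k] with ω h
    show |-S (k+1) ω - -S k ω| ≤ C
    have heq : -S (k+1) ω - -S k ω = -(S (k+1) ω - S k ω) := by ring
    rw [heq, abs_neg]
    exact h
  have hB := tail_one_sided hneg hS0' hC hbdd' hn ha
  have hA := tail_one_sided hmart hS0 hC hbdd hn ha
  have h1 : (μ {ω | a ≤ |S n ω|}).toReal ≤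
      (μ {ω | a ≤ S n ω}).toReal + (μ {ω | a ≤ -(S n ω)}).toReal := by
    rw [← ENNReal.toReal_add (measure_ne_top _ _) (measure_ne_top _ _)]
    refine ENNReal.toReal_mono (by finiteness) ?_
    refine (measure_mono ?_).trans (measure_union_le _ _)
    intro ω h
    rcases le_abs.mp (show a ≤ |S n ω| from h) with h' | h'
    · exact Or.inl h'
    · exact Or.inr h'
  have hB' : (μ {ω | a ≤ -(S n ω)}).toReal ≤ Real.exp (-(a ^ 2) / (2 * C ^ 2 * n)) := hB
  linarith

end

/-- For a martingale `S` with `S 0 = 0` and increments bounded almost surely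
by a constant `C > 0`, for every `ε > 0` and `δ ∈ (0, 1/4)` there exists a nonnegative
random variable `K` with `E[K²] < ∞` such that almost surely
`|S n| ≤ K + ε · n^(1/2 + δ)` for all `n ≥ 1`. -/
theorem stmt_2 {Ω : Type*} {m : MeasurableSpace Ω} (μ : Measure Ω) [IsProbabilityMeasure μ]
    (ℱ : Filtration ℕ m) (S : ℕ → Ω → ℝ)
    (hmart : Martingale S ℱ μ)
    (hS0 : ∀ᵐ ω ∂μ, S 0 ω = 0)
    (C : ℝ) (hC : 0 < C)
    (hbdd : ∀ n : ℕ, ∀ᵐ ω ∂μ, |S (n + 1) ω - S n ω| ≤ C)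
    (ε δ : ℝ) (hε : 0 < ε) (hδ : 0 < δ) (hδ' : δ < 1 / 4) :
    ∃ K : Ω → ℝ, (∀ ω, 0 ≤ K ω) ∧ Integrable (fun ω => (K ω) ^ 2) μ ∧
      ∀ᵐ ω ∂μ, ∀ n : ℕ, 1 ≤ n →
        |S n ω| ≤ K ω + ε * (n : ℝ) ^ ((1 : ℝ) / 2 + δ) := by
  classical
  have hSmeas : ∀ n, Measurable (S n) := fun n => ((hmart.stronglyAdapted n).mono (ℱ.le n)).measurable
  set a : ℕ → ℝ := fun n => ε * (n : ℝ) ^ ((1 : ℝ) / 2 + δ) with hadef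
  set c : ℝ := ε ^ 2 / (2 * C ^ 2) with hcdef
  have hcpos : 0 < c := by positivity
  set q : ℕ → ℝ := fun n => Real.exp (-c * (n : ℝ) ^ (2 * δ)) with hqdef
  have hqpos : ∀ n, 0 < q n := fun n => Real.exp_pos _
  -- tail bound
  have h_tail : ∀ n : ℕ, 1 ≤ n → (μ {ω | a n ≤ |S n ω|}).toReal ≤ 2 * q n := by
    intro n hn
    have hnR : (0 : ℝ) < n := by exact_mod_cast hn
    have hrp : (0 : ℝ) < (n : ℝ) ^ ((1 : ℝ) / 2 + δ) := Real.rpow_pos_of_pos hnR _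
    have hapos : 0 < a n := by simp only [hadef]; positivity
    refine (tail_abs hmart hS0 hC hbdd hn hapos).trans (le_of_eq ?_)
    congr 1
    simp only [hqdef, hadef]
    congr 1
    have h2 : ((n : ℝ) ^ ((1 : ℝ) / 2 + δ)) ^ 2 = (n : ℝ) ^ ((1 : ℝ) + 2 * δ) := by
      rw [← Real.rpow_natCast ((n : ℝ) ^ ((1 : ℝ) / 2 + δ)) 2, ← Real.rpow_mul hnR.le]
      norm_num
      ring_nf
    have h3 : (n : ℝ) ^ ((1 : ℝ) + 2 * δ) = n * (n : ℝ) ^ (2 * δ) := by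
      rw [Real.rpow_add hnR, Real.rpow_one]
    simp only [mul_pow, h2, h3, hcdef]
    field_simp
  -- the excess random variables
  set X : ℕ → Ω → ℝ := fun n ω => max (|S n ω| - a n) 0 with hXdef
  have hXnonneg : ∀ n ω, 0 ≤ X n ω := fun n ω => le_max_right _ _
  set g : ℕ → Ω → ℝ≥0∞ := fun n ω => ENNReal.ofReal (X n ω) with hgdef
  have hgmeas : ∀ n, Measurable (g n) := fun n =>
    ENNReal.measurable_ofReal.comp (((hSmeas n).abs.sub measurable_const).max measurable_const)
  set b : ℕ → ℝ := fun n => C * n * Real.sqrt (2 * q n) with hbdef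
  have hbnonneg : ∀ n, 0 ≤ b n := by
    intro n; simp only [hbdef]; positivity
  have hb_sum : Summable b := by
    have h1 : Summable (fun n : ℕ => (n : ℝ) * Real.exp (-(c / 2) * (n : ℝ) ^ (2 * δ))) :=
      summable_aux (by positivity) (by positivity)
    refine ((h1.mul_left (C * Real.sqrt 2)).congr (fun n => ?_))
    simp only [hbdef, hqdef]
    have : Real.sqrt (2 * Real.exp (-c * (n : ℝ) ^ (2 * δ)))
        = Real.sqrt 2 * Real.exp (-(c / 2) * (n : ℝ) ^ (2 * δ)) := by
      rw [Real.sqrt_mul (by norm_num), ← Real.exp_half]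
      congr 1
      ring
    rw [this]
    ring
  -- L² bound on each g n
  have hL2 : ∀ n : ℕ, (∫⁻ ω, g n ω ^ (2 : ℝ) ∂μ) ^ ((1 : ℝ) / 2) ≤ ENNReal.ofReal (b n) := by
    intro n
    rcases Nat.eq_zero_or_pos n with rfl | hn
    · have hz : ∀ᵐ ω ∂μ, g 0 ω ^ (2 : ℝ) = 0 := by
        filter_upwards [hS0] with ω h
        have ha0 : a 0 = 0 := by
          simp only [hadef]
          rw [Nat.cast_zero, Real.zero_rpow (by positivity : (1 : ℝ) / 2 + δ ≠ 0), mul_zero]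
        have : X 0 ω = 0 := by simp only [hXdef]; simp [h, ha0]
        simp only [hgdef]
        simp only [this, ENNReal.ofReal_zero]
        exact ENNReal.zero_rpow_of_pos (by norm_num)
      rw [lintegral_congr_ae hz, lintegral_zero, ENNReal.zero_rpow_of_pos (by norm_num)]
      exact zero_le
    · have hA : MeasurableSet {ω | a n ≤ |S n ω|} :=
        measurableSet_le measurable_const (hSmeas n).abs
      have hbound : ∀ᵐ ω ∂μ, g n ω ^ (2 : ℝ) ≤
          Set.indicator {ω | a n ≤ |S n ω|} (fun _ => ENNReal.ofReal ((C * n) ^ 2)) ω := by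
        have hrp : (0 : ℝ) < (n : ℝ) ^ ((1 : ℝ) / 2 + δ) :=
          Real.rpow_pos_of_pos (by exact_mod_cast hn) _
        have hapos : 0 < a n := by simp only [hadef]; positivity
        filter_upwards [abs_S_le hS0 hbdd n] with ω habs
        by_cases hin : a n ≤ |S n ω|
        · rw [Set.indicator_of_mem (show ω ∈ {ω | a n ≤ |S n ω|} from hin)]
          have hXle : X n ω ≤ C * n := by
            simp only [hXdef]
            refine max_le (by linarith) (by positivity)
          calc g n ω ^ (2 : ℝ) ≤ ENNReal.ofReal (C * n) ^ (2 : ℝ) :=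
                ENNReal.rpow_le_rpow (ENNReal.ofReal_le_ofReal hXle) (by norm_num)
            _ = ENNReal.ofReal ((C * n) ^ 2) := by
                rw [ENNReal.ofReal_rpow_of_nonneg (by positivity) (by norm_num)]
                norm_num
        · rw [Set.indicator_of_notMem (show ω ∉ {ω | a n ≤ |S n ω|} from hin)]
          have : X n ω = 0 := by
            simp only [hXdef]
            exact max_eq_right (by push_neg at hin; linarith)
          simp only [hgdef]
          simp only [this, ENNReal.ofReal_zero]
          rw [ENNReal.zero_rpow_of_pos (by norm_num)]
      have hstep : ∫⁻ ω, g n ω ^ (2 : ℝ) ∂μ ≤ ENNReal.ofReal (b n ^ 2) := by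
        calc ∫⁻ ω, g n ω ^ (2 : ℝ) ∂μ
            ≤ ∫⁻ ω, Set.indicator {ω | a n ≤ |S n ω|}
                (fun _ => ENNReal.ofReal ((C * n) ^ 2)) ω ∂μ := lintegral_mono_ae hbound
          _ = ENNReal.ofReal ((C * n) ^ 2) * μ {ω | a n ≤ |S n ω|} := by
              rw [lintegral_indicator hA, setLIntegral_const]
          _ ≤ ENNReal.ofReal ((C * n) ^ 2) * ENNReal.ofReal (2 * q n) := by
              gcongr
              exact (ENNReal.le_ofReal_iff_toReal_le (measure_ne_top _ _)
                (by positivity)).2 (h_tail n hn)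
          _ = ENNReal.ofReal (b n ^ 2) := by
              rw [← ENNReal.ofReal_mul (by positivity)]
              congr 1
              simp only [hbdef]
              have hs : Real.sqrt (2 * q n) ^ 2 = 2 * q n := Real.sq_sqrt (by positivity)
              nlinarith [hs]
      calc (∫⁻ ω, g n ω ^ (2 : ℝ) ∂μ) ^ ((1 : ℝ) / 2)
          ≤ ENNReal.ofReal (b n ^ 2) ^ ((1 : ℝ) / 2) :=
            ENNReal.rpow_le_rpow hstep (by norm_num)
        _ = ENNReal.ofReal (b n) := by
            rw [ENNReal.ofReal_rpow_of_nonneg (by positivity) (by norm_num),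
              ← Real.sqrt_eq_rpow, Real.sqrt_sq (hbnonneg n)]
  -- partial sums and Minkowski
  set F : ℕ → Ω → ℝ≥0∞ := fun N ω => ∑ n ∈ Finset.range N, g n ω with hFdef
  have hFmeas : ∀ N, Measurable (F N) := fun N =>
    Finset.measurable_sum _ (fun n _ => hgmeas n)
  have hMink : ∀ N, (∫⁻ ω, F N ω ^ (2 : ℝ) ∂μ) ^ ((1 : ℝ) / 2) ≤
      ∑ n ∈ Finset.range N, ENNReal.ofReal (b n) := by
    intro N
    induction N with
    | zero =>
      simp only [hFdef, Finset.range_zero, Finset.sum_empty]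
      rw [ENNReal.zero_rpow_of_pos (by norm_num), lintegral_zero,
        ENNReal.zero_rpow_of_pos (by norm_num)]
    | succ N ih =>
      have heq : ∀ ω, F (N + 1) ω = F N ω + g N ω := by
        intro ω; simp only [hFdef]; exact Finset.sum_range_succ _ _
      have h1 : (∫⁻ ω, F (N + 1) ω ^ (2 : ℝ) ∂μ) ^ ((1 : ℝ) / 2)
          = (∫⁻ ω, (F N + g N) ω ^ (2 : ℝ) ∂μ) ^ ((1 : ℝ) / 2) := by
        congr 1
        exact lintegral_congr (fun ω => by rw [heq ω]; rfl)
      rw [h1, Finset.sum_range_succ]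
      exact le_trans
        (ENNReal.lintegral_Lp_add_le (hFmeas N).aemeasurable (hgmeas N).aemeasurable one_le_two)
        (add_le_add ih (hL2 N))
  set B : ℝ := ∑' n, b n with hBdef
  have hFbound : ∀ N, ∫⁻ ω, F N ω ^ (2 : ℝ) ∂μ ≤ ENNReal.ofReal B ^ (2 : ℝ) := by
    intro N
    have h1 : (∫⁻ ω, F N ω ^ (2 : ℝ) ∂μ) ^ ((1 : ℝ) / 2) ≤ ENNReal.ofReal B := by
      refine (hMink N).trans ?_
      rw [← ENNReal.ofReal_sum_of_nonneg (fun i _ => hbnonneg i)]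
      exact ENNReal.ofReal_le_ofReal (Summable.sum_le_tsum _ (fun i _ => hbnonneg i) hb_sum)
    have h2 := ENNReal.rpow_le_rpow h1 (by norm_num : (0 : ℝ) ≤ 2)
    rwa [← ENNReal.rpow_mul, show ((1 : ℝ) / 2 * 2) = 1 by norm_num, ENNReal.rpow_one] at h2
  -- the total excess
  set T : Ω → ℝ≥0∞ := fun ω => ∑' n, g n ω with hTdef
  have hTmeas : Measurable T := Measurable.ennreal_tsum hgmeas
  have hFmono : ∀ ω, Monotone (fun N => F N ω) := by
    intro ω i j hij
    exact Finset.sum_le_sum_of_subset (Finset.range_subset_range.2 hij)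
  have hTsq : ∀ ω, T ω ^ (2 : ℝ) = ⨆ N, F N ω ^ (2 : ℝ) := by
    intro ω
    have h1 : T ω = ⨆ N, F N ω := ENNReal.tsum_eq_iSup_nat
    rw [h1]
    refine (iSup_eq_of_tendsto ?_ ?_).symm
    · exact fun i j hij => ENNReal.rpow_le_rpow (hFmono ω hij) (by norm_num)
    · exact (ENNReal.continuous_rpow_const.tendsto _).comp (tendsto_atTop_iSup (hFmono ω))
  have hT2 : ∫⁻ ω, T ω ^ (2 : ℝ) ∂μ ≤ ENNReal.ofReal B ^ (2 : ℝ) := by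
    calc ∫⁻ ω, T ω ^ (2 : ℝ) ∂μ = ∫⁻ ω, ⨆ N, F N ω ^ (2 : ℝ) ∂μ :=
          lintegral_congr hTsq
      _ = ⨆ N, ∫⁻ ω, F N ω ^ (2 : ℝ) ∂μ := by
          refine lintegral_iSup (fun N => ?_) ?_
          · exact (ENNReal.continuous_rpow_const.measurable).comp (hFmeas N)
          · intro i j hij ω
            exact ENNReal.rpow_le_rpow (hFmono ω hij) (by norm_num)
      _ ≤ ENNReal.ofReal B ^ (2 : ℝ) := iSup_le hFbound
  have hTne : ∫⁻ ω, T ω ^ (2 : ℝ) ∂μ ≠ ⊤ :=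
    (lt_of_le_of_lt hT2 (ENNReal.rpow_lt_top_of_nonneg (by norm_num)
      ENNReal.ofReal_ne_top)).ne
  have hT2meas : Measurable (fun ω => T ω ^ (2 : ℝ)) :=
    (ENNReal.continuous_rpow_const.measurable).comp hTmeas
  refine ⟨fun ω => (T ω).toReal, fun ω => ENNReal.toReal_nonneg, ?_, ?_⟩
  · have h := integrable_toReal_of_lintegral_ne_top hT2meas.aemeasurable hTne
    refine h.congr (Filter.Eventually.of_forall (fun ω => ?_))
    show ((T ω) ^ (2:ℝ)).toReal = (T ω).toReal ^ 2
    rw [← ENNReal.toReal_rpow]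
    rw [← Real.rpow_natCast ((T ω).toReal) 2]
    norm_num
  · have hfin : ∀ᵐ ω ∂μ, T ω ^ (2 : ℝ) < ⊤ := ae_lt_top hT2meas hTne
    filter_upwards [hfin] with ω hω
    intro n hn
    have hTfin : T ω ≠ ⊤ := by
      intro h
      rw [h, ENNReal.top_rpow_of_pos (by norm_num)] at hω
      exact absurd hω (lt_irrefl _)
    have h1 : g n ω ≤ T ω := ENNReal.le_tsum n
    have h2 : X n ω ≤ (T ω).toReal := by
      have h3 := ENNReal.toReal_mono hTfin h1
      rwa [hgdef, ENNReal.toReal_ofReal (hXnonneg n ω)] at h3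
    have h4 : |S n ω| - a n ≤ X n ω := le_max_left _ _
    have h5 : a n = ε * (n : ℝ) ^ ((1 : ℝ) / 2 + δ) := by simp only [hadef]
    linarith [h2, h4, h5.ge]
end
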